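/- Let η, η̂, d ≥ 0 and constants C₁, C₄ > 0, 0 < ρ₂ < 1, and suppose: (i) (stability on non-refined elements) |η̂_S − η_S| ≤ C₁ d where η_S², η̂_S² denote the sums of squared indicators over common elements; (ii) (reduction) η̂² − η̂_S² ≤ ρ₂(η² − η_S²) + C₂ d²; (iii) (discrete reliability) d² ≤ C₄² (η² − η_S²). Then there is a constant C_mon ≥ 1 depending only on C₁, C₂, C₄, ρ₂ such that η̂ ≤ C_mon η (quasi-monotonicity of the estimator under refinement). -/
import Mathlib


/-- Quasi-monotonicity of the estimator under refinement: stability (A1),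
reduction (A2) and discrete reliability (A4) imply `η̂ ≤ C_mon η` with a constant
depending only on `C₁, C₂, C₄, ρ₂`. Here `ηS, η̂S` denote the square roots of the
sums of squared indicators over the common (non-refined) elements. -/
theorem stmt_10 (C₁ C₂ C₄ ρ₂ : ℝ)
    (hC₁ : 0 < C₁) (hC₂ : 0 ≤ C₂) (hC₄ : 0 < C₄) (hρ₂0 : 0 < ρ₂) (hρ₂1 : ρ₂ < 1) :
    ∃ Cmon : ℝ, 1 ≤ Cmon ∧
      ∀ η ηhat d ηS ηhatS : ℝ,
        0 ≤ η → 0 ≤ ηhat → 0 ≤ d → 0 ≤ ηS → 0 ≤ ηhatS →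
        ηS ≤ η → ηhatS ≤ ηhat →
        |ηhatS - ηS| ≤ C₁ * d →
        ηhat ^ 2 - ηhatS ^ 2 ≤ ρ₂ * (η ^ 2 - ηS ^ 2) + C₂ * d ^ 2 →
        d ^ 2 ≤ C₄ ^ 2 * (η ^ 2 - ηS ^ 2) →
        ηhat ≤ Cmon * η := by
  have hK1 : (1:ℝ) ≤ 2 + 2 * C₁ ^ 2 * C₄ ^ 2 + ρ₂ + C₂ * C₄ ^ 2 := by
    have := sq_nonneg (C₁ * C₄)
    have h2 : (0:ℝ) ≤ C₂ * C₄ ^ 2 := mul_nonneg hC₂ (sq_nonneg C₄)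
    nlinarith
  refine ⟨2 + 2 * C₁ ^ 2 * C₄ ^ 2 + ρ₂ + C₂ * C₄ ^ 2, hK1, ?_⟩
  intro η ηhat d ηS ηhatS hη hηhat hd hηS hηhatS hSη hShat habs hred hrel
  set K : ℝ := 2 + 2 * C₁ ^ 2 * C₄ ^ 2 + ρ₂ + C₂ * C₄ ^ 2 with hK
  have h1 : ηhatS ≤ ηS + C₁ * d := by
    have := (abs_le.mp habs).2; linarith
  have h2 : ηhatS ^ 2 ≤ 2 * ηS ^ 2 + 2 * C₁ ^ 2 * d ^ 2 := by
    nlinarith [sq_nonneg (ηS - C₁ * d), mul_nonneg hηhatS hηhatS]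
  have hSsq : ηS ^ 2 ≤ η ^ 2 := by nlinarith
  have h3 : d ^ 2 ≤ C₄ ^ 2 * η ^ 2 := by nlinarith [sq_nonneg ηS, sq_nonneg C₄, mul_nonneg (sq_nonneg C₄) (sq_nonneg ηS)]
  have hd2a : C₁ ^ 2 * d ^ 2 ≤ C₁ ^ 2 * (C₄ ^ 2 * η ^ 2) :=
    mul_le_mul_of_nonneg_left h3 (sq_nonneg C₁)
  have hd2b : C₂ * d ^ 2 ≤ C₂ * (C₄ ^ 2 * η ^ 2) :=
    mul_le_mul_of_nonneg_left h3 hC₂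
  have hρ : ρ₂ * (η ^ 2 - ηS ^ 2) ≤ ρ₂ * η ^ 2 := by
    have : η ^ 2 - ηS ^ 2 ≤ η ^ 2 := by nlinarith [sq_nonneg ηS]
    exact le_trans (mul_le_mul_of_nonneg_left this hρ₂0.le) le_rfl
  have h4 : ηhat ^ 2 ≤ K * η ^ 2 := by
    rw [hK]; linarith
  have h5 : K * η ^ 2 ≤ (K * η) ^ 2 := by
    have : K * η ^ 2 ≤ K * (K * η ^ 2) := by
      nlinarith [mul_nonneg (show (0:ℝ) ≤ K by linarith) (sq_nonneg η)]
    calc K * η ^ 2 ≤ K * (K * η ^ 2) := this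
      _ = (K * η) ^ 2 := by ring
  have h6 : ηhat ^ 2 ≤ (K * η) ^ 2 := le_trans h4 h5
  have hKη : 0 ≤ K * η := mul_nonneg (by linarith) hη
  exact (pow_le_pow_iff_left₀ hηhat hKη (by norm_num)).mp h6
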